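/- Let F be the distribution function of a probability measure on [0,∞) with F(0)=0, and let Ψ_F be the compounding operator. If h : [0,∞) → ℝ is continuous with h(z) > 0 for all z ≥ 0, then (Ψ_Fⁿ h)(x) > 0 for every n ∈ ℕ and every x > 0, and consequently u_{α,h}(x) > 0 for every α > 0 and every x ≥ 0. -/

import Mathlib

open MeasureTheory Set Filter

/-- The compounding operator `Ψ_F` associated with the probability measure `μ` on `[0,∞)`
(whose distribution function is `F`, so that `F(0) = 0` reads `μ (Iic 0) = 0`):
`(Ψ_F h)(x) = ∫₀ˣ (h(z) - ∫₀ᶻ h(z-y) dF(y)) dz`,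
the inner integral being the Lebesgue–Stieltjes integral with respect to `F`. -/
noncomputable def Psi (μ : Measure ℝ) (h : ℝ → ℝ) : ℝ → ℝ :=
  fun x => ∫ z in (0:ℝ)..x, (h z - ∫ y in Icc (0:ℝ) z, h (z - y) ∂μ)

/-- `h : [0,∞) → ℝ` is locally bounded. -/
def LocBdd (h : ℝ → ℝ) : Prop :=
  ∀ x : ℝ, ∃ M : ℝ, ∀ z ∈ Icc (0:ℝ) x, |h z| ≤ M

/-- `‖h‖_{[0,x]} = sup_{z ∈ [0,x]} |h z|`. -/
noncomputable def supNorm (h : ℝ → ℝ) (x : ℝ) : ℝ :=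
  sSup ((fun z => |h z|) '' Icc (0:ℝ) x)

open scoped ENNReal

namespace PsiAux

/-- inner integral -/
noncomputable def inn (μ : Measure ℝ) (g : ℝ → ℝ) (z : ℝ) : ℝ :=
  ∫ y in Icc (0:ℝ) z, g (z - y) ∂μ

/-- the class of functions we iterate on -/
def Q (g : ℝ → ℝ) : Prop := Measurable g ∧ (∀ z < (0:ℝ), g z = 0) ∧ LocBdd g

variable {μ : Measure ℝ} {g f : ℝ → ℝ}

lemma Psi_eq (x : ℝ) : Psi μ g x = ∫ z in (0:ℝ)..x, (g z - inn μ g z) := rfl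

lemma Q.bound (hQ : Q g) (x : ℝ) : ∃ M : ℝ, 0 ≤ M ∧ ∀ z ∈ Icc (0:ℝ) x, |g z| ≤ M := by
  obtain ⟨M, hM⟩ := hQ.2.2 x
  exact ⟨max M 0, le_max_right _ _, fun z hz => (hM z hz).trans (le_max_left _ _)⟩

/-- a bound for g on all of `(-∞, x]` -/
lemma Q.bound' (hQ : Q g) (x : ℝ) : ∃ M : ℝ, 0 ≤ M ∧ ∀ z ≤ x, |g z| ≤ M := by
  obtain ⟨M, hM0, hM⟩ := hQ.bound x
  refine ⟨M, hM0, fun z hz => ?_⟩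
  rcases lt_or_ge z 0 with hz0 | hz0
  · simp [hQ.2.1 z hz0, hM0]
  · exact hM z ⟨hz0, hz⟩

lemma measurable_uncurry_aux (hg : Measurable g) :
    Measurable (Function.uncurry fun z y => (Icc (0:ℝ) z).indicator (fun y => g (z - y)) y) := by
  have hS : MeasurableSet {p : ℝ × ℝ | 0 ≤ p.2 ∧ p.2 ≤ p.1} :=
    (measurableSet_le measurable_const measurable_snd).inter
      (measurableSet_le measurable_snd measurable_fst)
  have hm : Measurable (fun p : ℝ × ℝ =>
      ({p : ℝ × ℝ | 0 ≤ p.2 ∧ p.2 ≤ p.1}).indicator (fun p => g (p.1 - p.2)) p) :=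
    (hg.comp (measurable_fst.sub measurable_snd)).indicator hS
  have heq : (Function.uncurry fun z y => (Icc (0:ℝ) z).indicator (fun y => g (z - y)) y)
      = fun p : ℝ × ℝ =>
        ({p : ℝ × ℝ | 0 ≤ p.2 ∧ p.2 ≤ p.1}).indicator (fun p => g (p.1 - p.2)) p := by
    funext p
    rcases p with ⟨z, y⟩
    by_cases hy : y ∈ Icc (0:ℝ) z
    · rw [Function.uncurry, indicator_of_mem hy, indicator_of_mem]
      exact hy
    · rw [Function.uncurry, indicator_of_notMem hy, indicator_of_notMem]
      exact hy
  rw [heq]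
  exact hm

lemma measurable_inn [SFinite μ] (hg : Measurable g) : Measurable (inn μ g) := by
  have hrw : inn μ g = fun z => ∫ y, (Icc (0:ℝ) z).indicator (fun y => g (z - y)) y ∂μ := by
    funext z
    rw [integral_indicator measurableSet_Icc]
    rfl
  rw [hrw]
  exact (StronglyMeasurable.integral_prod_right' (ν := μ)
    (f := Function.uncurry fun z y => (Icc (0:ℝ) z).indicator (fun y => g (z - y)) y)
    ((measurable_uncurry_aux hg).stronglyMeasurable)).measurable

lemma inn_zero (hμ0 : μ (Iic 0) = 0) {z : ℝ} (hz : z ≤ 0) : inn μ g z = 0 := by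
  have : μ (Icc (0:ℝ) z) = 0 :=
    measure_mono_null (fun y hy => le_trans hy.2 hz) hμ0
  have h0 : μ.restrict (Icc (0:ℝ) z) = 0 := Measure.restrict_eq_zero.2 this
  simp only [inn, h0, integral_zero_measure]

lemma inn_bound [IsProbabilityMeasure μ] (hg : Measurable g) {z M : ℝ} (hM : 0 ≤ M)
    (hb : ∀ t ∈ Icc (0:ℝ) z, |g t| ≤ M) : |inn μ g z| ≤ M := by
  have h1 : |inn μ g z| ≤ M * (μ (Icc (0:ℝ) z)).toReal := by
    show ‖∫ y in Icc (0:ℝ) z, g (z - y) ∂μ‖ ≤ M * (μ (Icc (0:ℝ) z)).toReal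
    refine norm_setIntegral_le_of_norm_le_const (measure_lt_top μ _) ?_
    intro y hy
    exact hb (z - y) ⟨by linarith [hy.1, hy.2], by linarith [hy.1]⟩
  refine h1.trans ?_
  have h2 : (μ (Icc (0:ℝ) z)).toReal ≤ 1 := by
    have h3 := ENNReal.toReal_mono (by simp) (prob_le_one (μ := μ) (s := Icc (0:ℝ) z))
    simpa using h3
  exact mul_le_of_le_one_right hM h2

lemma inn_empty {z : ℝ} (hz : z < 0) : inn μ g z = 0 := by
  unfold inn
  rw [Icc_eq_empty (by linarith : ¬ (0:ℝ) ≤ z)]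
  simp

lemma intervalIntegrable_of_bdd {f : ℝ → ℝ} (hf : Measurable f) {C a b : ℝ}
    (h : ∀ z ∈ Set.uIoc a b, |f z| ≤ C) : IntervalIntegrable f volume a b := by
  rw [intervalIntegrable_iff]
  refine Integrable.mono' ((integrableOn_const (C := C) (s := Set.uIoc a b) (μ := volume) (by rw [Set.uIoc]; exact measure_Ioc_lt_top.ne))) hf.aestronglyMeasurable ?_
  refine (ae_restrict_iff' measurableSet_uIoc).2 (Eventually.of_forall ?_)
  intro z hz
  simpa using h z hz

lemma Q.intervalIntegrable (hQ : Q g) (a b : ℝ) : IntervalIntegrable g volume a b := by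
  obtain ⟨M, hM0, hM⟩ := hQ.bound' (max a b)
  exact intervalIntegrable_of_bdd hQ.1 (fun z hz => hM z hz.2)

lemma Q.integrand_bound [IsProbabilityMeasure μ] (hQ : Q g) (x : ℝ) :
    ∃ M : ℝ, 0 ≤ M ∧ ∀ z ≤ x, |g z - inn μ g z| ≤ M := by
  obtain ⟨M, hM0, hM⟩ := hQ.bound' x
  refine ⟨M + M, by linarith, fun z hz => ?_⟩
  rcases lt_or_ge z 0 with hz0 | hz0
  · rw [hQ.2.1 z hz0, inn_empty hz0]
    simp; linarith
  · have h1 : |g z| ≤ M := hM z hz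
    have h2 : |inn μ g z| ≤ M :=
      inn_bound hQ.1 hM0 (fun t ht => hM t (ht.2.trans hz))
    calc |g z - inn μ g z| ≤ |g z| + |inn μ g z| := abs_sub _ _
    _ ≤ M + M := by linarith

lemma Q.intervalIntegrable_integrand [IsProbabilityMeasure μ] (hQ : Q g) (a b : ℝ) :
    IntervalIntegrable (fun z => g z - inn μ g z) volume a b := by
  obtain ⟨M, hM0, hM⟩ := hQ.integrand_bound (μ := μ) (max a b)
  exact intervalIntegrable_of_bdd (hQ.1.sub (measurable_inn hQ.1))
    (fun z hz => hM z hz.2)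

lemma Q.psi_continuous [IsProbabilityMeasure μ] (hQ : Q g) : Continuous (Psi μ g) :=
  intervalIntegral.continuous_primitive (fun a b => hQ.intervalIntegrable_integrand a b) 0

lemma ae_ne_zero : ∀ᵐ z ∂(volume : Measure ℝ), z ≠ 0 := by
  rw [ae_iff]
  simpa using Real.volume_singleton (x := (0:ℝ))

lemma Psi_zero_of_nonpos (hQ : Q g) {x : ℝ} (hx : x ≤ 0) : Psi μ g x = 0 := by
  rw [Psi_eq]
  have hc : ∀ᵐ z ∂(volume : Measure ℝ), z ∈ Set.uIoc (0:ℝ) x → (g z - inn μ g z) = (0:ℝ) := by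
    filter_upwards [ae_ne_zero] with z hz hmem
    rcases Set.mem_uIoc.1 hmem with h | h
    · linarith [h.1, h.2]
    · have hz0 : z < 0 := lt_of_le_of_ne h.2 hz
      rw [hQ.2.1 z hz0, inn_empty hz0]
      simp
  rw [intervalIntegral.integral_congr_ae hc]
  simp

lemma Q.psi [IsProbabilityMeasure μ] (hQ : Q g) : Q (Psi μ g) := by
  refine ⟨hQ.psi_continuous.measurable, fun z hz => Psi_zero_of_nonpos hQ hz.le, fun x => ?_⟩
  obtain ⟨M, hM0, hM⟩ := hQ.integrand_bound (μ := μ) x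
  refine ⟨M * |x|, fun z hz => ?_⟩
  rw [Psi_eq]
  have h1 : |∫ t in (0:ℝ)..z, (g t - inn μ g t)| ≤ M * |z - 0| := by
    show ‖∫ t in (0:ℝ)..z, (g t - inn μ g t)‖ ≤ M * |z - 0|
    refine intervalIntegral.norm_integral_le_of_norm_le_const ?_
    intro t ht
    have ht' : t ≤ z := (Set.mem_uIoc.1 ht).elim (fun h => h.2) (fun h => by linarith [h.1, hz.1])
    exact hM t (ht'.trans hz.2)
  refine h1.trans ?_
  rw [sub_zero]
  have : |z| ≤ |x| := by
    rw [abs_of_nonneg hz.1, abs_of_nonneg (hz.1.trans hz.2)]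
    exact hz.2
  nlinarith

/-- the primitive of `g` -/
noncomputable def Gfun (g : ℝ → ℝ) (t : ℝ) : ℝ := ∫ s in (0:ℝ)..t, g s

lemma Q.G_cont (hQ : Q g) : Continuous (Gfun g) :=
  intervalIntegral.continuous_primitive (fun a b => hQ.intervalIntegrable a b) 0

lemma Q.G_zero (hQ : Q g) {t : ℝ} (ht : t ≤ 0) : Gfun g t = 0 := by
  unfold Gfun
  have hc : ∀ᵐ z ∂(volume : Measure ℝ), z ∈ Set.uIoc (0:ℝ) t → g z = (0:ℝ) := by
    filter_upwards [ae_ne_zero] with z hz hmem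
    rcases Set.mem_uIoc.1 hmem with h | h
    · linarith [h.1, h.2]
    · exact hQ.2.1 z (lt_of_le_of_ne h.2 hz)
  rw [intervalIntegral.integral_congr_ae hc]
  simp

lemma Q.G_bound (hQ : Q g) {x : ℝ} (hx : 0 ≤ x) : ∀ t ≤ x, |Gfun g t| ≤ (hQ.bound x).choose * x := by
  obtain ⟨hM0, hM⟩ := (hQ.bound x).choose_spec
  set M := (hQ.bound x).choose
  intro t ht
  rcases le_or_gt t 0 with ht0 | ht0
  · rw [hQ.G_zero ht0]
    simpa using mul_nonneg hM0 hx
  · have h1 : |Gfun g t| ≤ M * |t - 0| := by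
      show ‖∫ s in (0:ℝ)..t, g s‖ ≤ M * |t - 0|
      refine intervalIntegral.norm_integral_le_of_norm_le_const ?_
      intro s hs
      rw [uIoc_of_le ht0.le] at hs
      exact hM s ⟨hs.1.le, hs.2.trans ht⟩
    refine h1.trans ?_
    rw [sub_zero, abs_of_pos ht0]
    nlinarith

lemma Q.G_diff (hQ : Q g) (s t : ℝ) : Gfun g t - Gfun g s = ∫ z in s..t, g z := by
  have := intervalIntegral.integral_add_adjacent_intervals
    (hQ.intervalIntegrable 0 s) (hQ.intervalIntegrable s t)
  unfold Gfun
  linarith [this]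

lemma Q.G_mono (hQ : Q g) (hnn : ∀ z, 0 ≤ g z) : Monotone (Gfun g) := by
  intro s t hst
  have h2 : 0 ≤ ∫ z in s..t, g z :=
    intervalIntegral.integral_nonneg hst (fun u _ => hnn u)
  have := hQ.G_diff s t
  linarith

lemma ae_pos (hμ0 : μ (Iic 0) = 0) : ∀ᵐ y ∂μ, 0 < y := by
  rw [ae_iff]
  convert hμ0 using 2
  ext y
  simp [not_lt]

lemma key [IsProbabilityMeasure μ] (hμ0 : μ (Iic 0) = 0) (hQ : Q g) {x : ℝ} (hx : 0 ≤ x) :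
    Psi μ g x = ∫ y, (Gfun g x - Gfun g (x - y)) ∂μ := by
  obtain ⟨M, hM0, hM⟩ := hQ.bound' x
  have hinnInt : IntervalIntegrable (inn μ g) volume 0 x := by
    refine intervalIntegrable_of_bdd (measurable_inn hQ.1) (C := M) ?_
    intro z hz
    rw [uIoc_of_le hx] at hz
    exact inn_bound hQ.1 hM0 (fun t ht => hM t (ht.2.trans hz.2))
  have hsplit : Psi μ g x = Gfun g x - ∫ z in (0:ℝ)..x, inn μ g z := by
    rw [Psi_eq]
    exact intervalIntegral.integral_sub (hQ.intervalIntegrable 0 x) hinnInt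
  -- Fubini
  haveI : Fact ((volume : Measure ℝ) (Ioc (0:ℝ) x) < ∞) := ⟨measure_Ioc_lt_top⟩
  have hprod : (volume.restrict (Ioc (0:ℝ) x)).prod μ
      = ((volume : Measure ℝ).prod μ).restrict ((Ioc (0:ℝ) x) ×ˢ univ) := by
    rw [← Measure.prod_restrict, Measure.restrict_univ]
  have hintP : Integrable
      (Function.uncurry fun z y => (Icc (0:ℝ) z).indicator (fun y' => g (z - y')) y)
      ((volume.restrict (Ioc (0:ℝ) x)).prod μ) := by
    refine Integrable.mono' (integrable_const M)
      (measurable_uncurry_aux hQ.1).aestronglyMeasurable ?_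
    rw [hprod]
    filter_upwards [ae_restrict_mem (measurableSet_Ioc.prod MeasurableSet.univ)] with p hp
    rcases p with ⟨z, y⟩
    have hz : z ∈ Ioc (0:ℝ) x := hp.1
    simp only [Function.uncurry_apply_pair]
    by_cases hy : y ∈ Icc (0:ℝ) z
    · rw [indicator_of_mem hy]
      exact hM (z - y) (by linarith [hy.1, hz.2])
    · rw [indicator_of_notMem hy]
      simpa using hM0
  have hswap : (∫ z in (0:ℝ)..x, inn μ g z)
      = ∫ y, (∫ z in Ioc (0:ℝ) x, (Icc (0:ℝ) z).indicator (fun y' => g (z - y')) y) ∂μ := by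
    rw [intervalIntegral.integral_of_le hx]
    have h1 : ∀ z, inn μ g z = ∫ y, (Icc (0:ℝ) z).indicator (fun y' => g (z - y')) y ∂μ := by
      intro z
      rw [integral_indicator measurableSet_Icc]
      rfl
    simp_rw [h1]
    exact integral_integral_swap hintP
  have hae : ∀ᵐ y ∂μ,
      (∫ z in Ioc (0:ℝ) x, (Icc (0:ℝ) z).indicator (fun y' => g (z - y')) y) = Gfun g (x - y) := by
    filter_upwards [ae_pos hμ0] with y hy
    have h2 : ∀ z, (Icc (0:ℝ) z).indicator (fun y' => g (z - y')) y
        = (Ici y).indicator (fun z => g (z - y)) z := by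
      intro z
      by_cases hyz : y ≤ z
      · rw [indicator_of_mem (mem_Icc.2 ⟨hy.le, hyz⟩), indicator_of_mem (mem_Ici.2 hyz)]
      · rw [indicator_of_notMem (fun hmem => hyz (mem_Icc.1 hmem).2),
          indicator_of_notMem (fun hmem => hyz (mem_Ici.1 hmem))]
    simp_rw [h2]
    rw [setIntegral_indicator measurableSet_Ici]
    have h3 : Ioc (0:ℝ) x ∩ Ici y = Icc y x := by
      ext z
      simp only [mem_inter_iff, mem_Ioc, mem_Ici, mem_Icc]
      constructor
      · rintro ⟨⟨_, h2⟩, h3⟩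
        exact ⟨h3, h2⟩
      · rintro ⟨h1, h2⟩
        exact ⟨⟨lt_of_lt_of_le hy h1, h2⟩, h1⟩
    rw [h3, integral_Icc_eq_integral_Ioc]
    rcases le_or_gt y x with hyx | hyx
    · rw [← intervalIntegral.integral_of_le hyx,
        intervalIntegral.integral_comp_sub_right (fun z => g z) y]
      simp only [sub_self]
      rfl
    · rw [Ioc_eq_empty (not_lt.2 hyx.le)]
      simp only [Measure.restrict_empty, integral_zero_measure]
      rw [hQ.G_zero (by linarith)]
  have hGmeas : Measurable fun y => Gfun g (x - y) :=
    (hQ.G_cont.comp (continuous_const.sub continuous_id)).measurable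
  have hGint : Integrable (fun y => Gfun g (x - y)) μ := by
    refine Integrable.mono' (integrable_const ((hQ.bound x).choose * x))
      hGmeas.aestronglyMeasurable ?_
    filter_upwards [ae_pos hμ0] with y hy
    exact hQ.G_bound hx (x - y) (by linarith)
  rw [hsplit, hswap, integral_congr_ae hae,
    integral_sub (integrable_const (Gfun g x)) hGint, integral_const]
  simp

lemma Q.G_integrable [IsProbabilityMeasure μ] (hμ0 : μ (Iic 0) = 0) (hQ : Q g) {x : ℝ}
    (hx : 0 ≤ x) : Integrable (fun y => Gfun g (x - y)) μ := by
  refine Integrable.mono' (integrable_const ((hQ.bound x).choose * x))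
    ((hQ.G_cont.comp (continuous_const.sub continuous_id)).measurable).aestronglyMeasurable ?_
  filter_upwards [ae_pos hμ0] with y hy
  exact hQ.G_bound hx (x - y) (by linarith)

/-- the positivity class -/
def P (g : ℝ → ℝ) : Prop := Q g ∧ (∀ z, 0 ≤ g z) ∧ (∀ z > (0:ℝ), 0 < g z)

lemma measure_Ioi_eq_one [IsProbabilityMeasure μ] (hμ0 : μ (Iic 0) = 0) : μ (Ioi (0:ℝ)) = 1 := by
  have h := measure_compl (measurableSet_Iic (a := (0:ℝ))) (measure_ne_top μ _)
  rw [compl_Iic, hμ0, measure_univ] at h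
  simpa using h

lemma P.psi_pos [IsProbabilityMeasure μ] (hμ0 : μ (Iic 0) = 0) (hP : P g) {x : ℝ}
    (hx : 0 < x) : 0 < Psi μ g x := by
  obtain ⟨hQ, hnn, hp⟩ := hP
  rw [key hμ0 hQ hx.le]
  have hfint : Integrable (fun y => Gfun g x - Gfun g (x - y)) μ :=
    (integrable_const _).sub (hQ.G_integrable hμ0 hx.le)
  have hnn_ae : 0 ≤ᵐ[μ] fun y => Gfun g x - Gfun g (x - y) := by
    filter_upwards [ae_pos hμ0] with y hy
    have := hQ.G_mono hnn (by linarith : x - y ≤ x)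
    simpa [sub_nonneg] using this
  have hsupp : Ioi (0:ℝ) ⊆ Function.support fun y => Gfun g x - Gfun g (x - y) := by
    intro y hy
    have hy' : (0:ℝ) < y := hy
    have hpos : 0 < Gfun g x - Gfun g (x - y) := by
      rcases le_or_gt y x with hyx | hyx
      · rw [hQ.G_diff (x - y) x]
        refine intervalIntegral.intervalIntegral_pos_of_pos_on
          (hQ.intervalIntegrable (x - y) x) ?_ (by linarith)
        intro z hz
        exact hp z (by linarith [hz.1])
      · rw [hQ.G_zero (by linarith : x - y ≤ 0), sub_zero]
        have h0 : Gfun g 0 = 0 := hQ.G_zero le_rfl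
        have hdiff : Gfun g x = ∫ z in (0:ℝ)..x, g z := by
          have := hQ.G_diff 0 x
          rw [h0] at this
          linarith
        rw [hdiff]
        refine intervalIntegral.intervalIntegral_pos_of_pos_on
          (hQ.intervalIntegrable 0 x) ?_ hx
        intro z hz
        exact hp z hz.1
    exact ne_of_gt hpos
  refine (integral_pos_iff_support_of_nonneg_ae hnn_ae hfint).2 ?_
  refine lt_of_lt_of_le ?_ (measure_mono hsupp)
  rw [measure_Ioi_eq_one hμ0]
  exact zero_lt_one

lemma P.psi [IsProbabilityMeasure μ] (hμ0 : μ (Iic 0) = 0) (hP : P g) : P (Psi μ g) := by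
  refine ⟨hP.1.psi, fun z => ?_, fun z hz => hP.psi_pos hμ0 hz⟩
  rcases le_or_gt z 0 with hz | hz
  · rw [Psi_zero_of_nonpos hP.1 hz]
  · exact (hP.psi_pos hμ0 hz).le

lemma P.iter [IsProbabilityMeasure μ] (hμ0 : μ (Iic 0) = 0) (hP : P g) (n : ℕ) :
    P ((Psi μ)^[n] g) := by
  induction n with
  | zero => exact hP
  | succ n ih =>
    rw [Function.iterate_succ_apply']
    exact ih.psi hμ0

lemma psi_congr (hfg : EqOn f g (Ici 0)) : EqOn (Psi μ f) (Psi μ g) (Ici 0) := by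
  intro x hx
  rw [Psi_eq, Psi_eq]
  apply intervalIntegral.integral_congr
  intro z hz
  rw [uIcc_of_le (mem_Ici.1 hx)] at hz
  have h1 : f z = g z := hfg hz.1
  have h2 : inn μ f z = inn μ g z := by
    refine setIntegral_congr_fun measurableSet_Icc (fun y hy => ?_)
    exact hfg (by simp only [mem_Ici]; linarith [hy.1, hy.2] : z - y ∈ Ici (0:ℝ))
  simp only [h1, h2]

lemma psi_iter_congr (hfg : EqOn f g (Ici 0)) (n : ℕ) :
    EqOn ((Psi μ)^[n] f) ((Psi μ)^[n] g) (Ici 0) := by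
  induction n with
  | zero => exact hfg
  | succ n ih =>
    rw [Function.iterate_succ_apply', Function.iterate_succ_apply']
    exact psi_congr ih

lemma Q.add (hf : Q f) (hg : Q g) : Q (fun t => f t + g t) := by
  refine ⟨hf.1.add hg.1, fun z hz => by show f z + g z = 0; rw [hf.2.1 z hz, hg.2.1 z hz, add_zero], fun x => ?_⟩
  obtain ⟨M, hM⟩ := hf.2.2 x
  obtain ⟨M', hM'⟩ := hg.2.2 x
  exact ⟨M + M', fun z hz => (abs_add_le _ _).trans (add_le_add (hM z hz) (hM' z hz))⟩

lemma Q.smul (hg : Q g) (c : ℝ) : Q (fun t => c * g t) := by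
  refine ⟨measurable_const.mul hg.1, fun z hz => by show c * g z = 0; rw [hg.2.1 z hz, mul_zero], fun x => ?_⟩
  obtain ⟨M, hM⟩ := hg.2.2 x
  refine ⟨|c| * M, fun z hz => ?_⟩
  rw [abs_mul]
  exact mul_le_mul_of_nonneg_left (hM z hz) (abs_nonneg c)

lemma Q.iter_mem [IsProbabilityMeasure μ] (hQ : Q g) (n : ℕ) : Q ((Psi μ)^[n] g) := by
  induction n with
  | zero => exact hQ
  | succ n ih =>
    rw [Function.iterate_succ_apply']
    exact ih.psi

lemma integrableOn_inn_aux [IsFiniteMeasure μ] (hg : Measurable g) {z M : ℝ}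
    (hb : ∀ t ∈ Icc (0:ℝ) z, |g t| ≤ M) :
    IntegrableOn (fun y => g (z - y)) (Icc (0:ℝ) z) μ := by
  refine Integrable.mono' (integrable_const M)
    ((hg.comp (measurable_const.sub measurable_id)).aestronglyMeasurable) ?_
  refine (ae_restrict_iff' measurableSet_Icc).2 (Eventually.of_forall fun y hy => ?_)
  have hy' := mem_Icc.1 hy
  exact hb (z - y) (mem_Icc.2 ⟨by linarith [hy'.1, hy'.2], by linarith [hy'.1]⟩)

lemma inn_add [IsProbabilityMeasure μ] (hμ0 : μ (Iic 0) = 0) (hf : Q f) (hg : Q g) (z : ℝ) :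
    inn μ (fun t => f t + g t) z = inn μ f z + inn μ g z := by
  rcases le_or_gt z 0 with hz | hz
  · rw [inn_zero hμ0 hz, inn_zero hμ0 hz, inn_zero hμ0 hz, add_zero]
  · obtain ⟨M, hM0, hM⟩ := hf.bound z
    obtain ⟨M', hM0', hM'⟩ := hg.bound z
    show (∫ y in Icc (0:ℝ) z, (f (z - y) + g (z - y)) ∂μ) = _
    rw [integral_add (integrableOn_inn_aux hf.1 hM) (integrableOn_inn_aux hg.1 hM')]
    rfl

lemma psi_add [IsProbabilityMeasure μ] (hμ0 : μ (Iic 0) = 0) (hf : Q f) (hg : Q g) (x : ℝ) :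
    Psi μ (fun t => f t + g t) x = Psi μ f x + Psi μ g x := by
  have h1 : Psi μ (fun t => f t + g t) x
      = ∫ z in (0:ℝ)..x, ((f z - inn μ f z) + (g z - inn μ g z)) := by
    rw [Psi_eq]
    refine intervalIntegral.integral_congr (fun z _ => ?_)
    show f z + g z - inn μ (fun t => f t + g t) z = (f z - inn μ f z) + (g z - inn μ g z)
    rw [inn_add hμ0 hf hg z]
    ring
  rw [h1, intervalIntegral.integral_add (hf.intervalIntegrable_integrand 0 x)
    (hg.intervalIntegrable_integrand 0 x), Psi_eq, Psi_eq]

lemma inn_smul (c : ℝ) (g : ℝ → ℝ) (z : ℝ) :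
    inn μ (fun t => c * g t) z = c * inn μ g z := by
  show (∫ y in Icc (0:ℝ) z, c * g (z - y) ∂μ) = _
  rw [integral_const_mul]
  rfl

lemma psi_smul (c : ℝ) (g : ℝ → ℝ) (x : ℝ) :
    Psi μ (fun t => c * g t) x = c * Psi μ g x := by
  have h1 : Psi μ (fun t => c * g t) x = ∫ z in (0:ℝ)..x, c * (g z - inn μ g z) := by
    rw [Psi_eq]
    refine intervalIntegral.integral_congr (fun z _ => ?_)
    show c * g z - inn μ (fun t => c * g t) z = c * (g z - inn μ g z)
    rw [inn_smul c g z]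
    ring
  rw [h1, intervalIntegral.integral_const_mul, Psi_eq]

lemma psi_iter_add [IsProbabilityMeasure μ] (hμ0 : μ (Iic 0) = 0) (hf : Q f) (hg : Q g)
    (n : ℕ) (x : ℝ) :
    (Psi μ)^[n] (fun t => f t + g t) x = (Psi μ)^[n] f x + (Psi μ)^[n] g x := by
  induction n generalizing x with
  | zero => rfl
  | succ n ih =>
    rw [Function.iterate_succ_apply', Function.iterate_succ_apply',
      Function.iterate_succ_apply']
    have : (Psi μ)^[n] (fun t => f t + g t)
        = fun t => (Psi μ)^[n] f t + (Psi μ)^[n] g t := funext fun t => ih t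
    rw [this]
    exact psi_add hμ0 (hf.iter_mem n) (hg.iter_mem n) x

lemma psi_iter_smul (c : ℝ) (g : ℝ → ℝ) (n : ℕ) (x : ℝ) :
    (Psi μ)^[n] (fun t => c * g t) x = c * (Psi μ)^[n] g x := by
  induction n generalizing x with
  | zero => rfl
  | succ n ih =>
    rw [Function.iterate_succ_apply', Function.iterate_succ_apply']
    have : (Psi μ)^[n] (fun t => c * g t) = fun t => c * (Psi μ)^[n] g t :=
      funext fun t => ih t
    rw [this]
    exact psi_smul c _ x

lemma iter_bound [IsProbabilityMeasure μ] (hQ : Q g) {x M : ℝ} (hx : 0 ≤ x) (hM : 0 ≤ M)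
    (hb : ∀ z ∈ Icc (0:ℝ) x, |g z| ≤ M) (n : ℕ) :
    ∀ z ∈ Icc (0:ℝ) x, |((Psi μ)^[n] g) z| ≤ M * (2*z)^n / n.factorial := by
  induction n with
  | zero =>
    intro z hz
    simpa using hb z hz
  | succ n ih =>
    intro z hz
    rw [Function.iterate_succ_apply']
    set v := (Psi μ)^[n] g with hv
    have hQv : Q v := hQ.iter_mem n
    have hbd : ∀ t ∈ Set.uIoc (0:ℝ) z, |v t - inn μ v t| ≤ 2 * (M * (2*t)^n / n.factorial) := by
      intro t ht
      rw [uIoc_of_le hz.1] at ht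
      have ht' : t ∈ Icc (0:ℝ) x := ⟨ht.1.le, ht.2.trans hz.2⟩
      have h1 : |v t| ≤ M * (2*t)^n / n.factorial := ih t ht'
      have h2 : |inn μ v t| ≤ M * (2*t)^n / n.factorial := by
        have ht0 : (0:ℝ) ≤ t := ht.1.le
        refine inn_bound hQv.1
          (div_nonneg (mul_nonneg hM (pow_nonneg (by linarith) n)) (Nat.cast_nonneg _)) ?_
        intro s hs
        refine (ih s ⟨hs.1, hs.2.trans ht'.2⟩).trans ?_
        have hpow : (2*s)^n ≤ (2*t)^n :=
          pow_le_pow_left₀ (by linarith [hs.1]) (by linarith [hs.2]) n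
        have hfac : (0:ℝ) < n.factorial := Nat.cast_pos.2 n.factorial_pos
        exact (div_le_div_iff_of_pos_right hfac).2 (mul_le_mul_of_nonneg_left hpow hM)
      calc |v t - inn μ v t| ≤ |v t| + |inn μ v t| := abs_sub _ _
        _ ≤ 2 * (M * (2*t)^n / n.factorial) := by linarith
    have hInt : IntervalIntegrable (fun t => 2 * (M * (2*t)^n / n.factorial)) volume 0 z :=
      (Continuous.intervalIntegrable (by fun_prop) 0 z)
    have h3 : |Psi μ v z| ≤ |∫ t in (0:ℝ)..z, 2 * (M * (2*t)^n / n.factorial)| := by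
      show ‖∫ t in (0:ℝ)..z, (v t - inn μ v t)‖ ≤ _
      exact intervalIntegral.norm_integral_le_abs_of_norm_le
        ((ae_restrict_iff' measurableSet_uIoc).2 (Eventually.of_forall hbd)) hInt
    have h4 : (∫ t in (0:ℝ)..z, 2 * (M * (2*t)^n / n.factorial))
        = M * (2*z)^(n+1) / (n+1).factorial := by
      have hfn : (fun t : ℝ => 2 * (M * (2*t)^n / n.factorial))
          = fun t : ℝ => (2 * M * 2^n / n.factorial) * t^n := funext fun t => by
        rw [mul_pow]; ring
      rw [hfn, intervalIntegral.integral_const_mul, integral_pow, Nat.factorial_succ, mul_pow]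
      have hfac : (n.factorial : ℝ) ≠ 0 := Nat.cast_ne_zero.2 n.factorial_ne_zero
      have hn1 : ((n:ℝ) + 1) ≠ 0 := by positivity
      push_cast
      field_simp
      ring
    rw [h4] at h3
    refine h3.trans ?_
    rw [abs_of_nonneg (div_nonneg (mul_nonneg hM (pow_nonneg (by linarith [hz.1]) _))
      (Nat.cast_nonneg _))]

lemma series [IsProbabilityMeasure μ] (hμ0 : μ (Iic 0) = 0) {h₀ u₀ : ℝ → ℝ} {a : ℝ}
    (hh : Q h₀) (hu : Q u₀)
    (hrel : ∀ x ≥ (0:ℝ), u₀ x = a * (h₀ x + Psi μ u₀ x)) (n : ℕ) :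
    ∀ x ≥ (0:ℝ), u₀ x = (∑ k ∈ Finset.range n, a^(k+1) * ((Psi μ)^[k] h₀) x)
      + a^n * ((Psi μ)^[n] u₀) x := by
  induction n with
  | zero => intro x hx; simp
  | succ n ih =>
    intro x hx
    have hEq : EqOn u₀ (fun t => a * h₀ t + a * Psi μ u₀ t) (Ici 0) := fun t ht => by
      rw [hrel t ht]; ring
    have hstep : ((Psi μ)^[n] u₀) x
        = a * ((Psi μ)^[n] h₀) x + a * ((Psi μ)^[n+1] u₀) x := by
      calc ((Psi μ)^[n] u₀) x
          = (Psi μ)^[n] (fun t => a * h₀ t + a * Psi μ u₀ t) x :=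
            psi_iter_congr hEq n (mem_Ici.2 hx)
        _ = (Psi μ)^[n] (fun t => a * h₀ t) x + (Psi μ)^[n] (fun t => a * Psi μ u₀ t) x :=
            psi_iter_add hμ0 (hh.smul a) (hu.psi.smul a) n x
        _ = a * ((Psi μ)^[n] h₀) x + a * ((Psi μ)^[n] (Psi μ u₀)) x := by
            rw [psi_iter_smul a h₀ n x, psi_iter_smul a (Psi μ u₀) n x]
        _ = a * ((Psi μ)^[n] h₀) x + a * ((Psi μ)^[n+1] u₀) x := by
            rw [Function.iterate_succ_apply]
    rw [Finset.sum_range_succ]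
    have hihx := ih x hx
    rw [hihx, hstep]
    ring

end PsiAux

open PsiAux

/-- if `h` is continuous on `[0,∞)` and strictly positive there, then
`(Ψ_Fⁿ h)(x) > 0` for every `n` and every `x > 0`, and consequently any measurable locally
bounded solution `u_{α,h}` of `u = α(h + Ψ_F u)` is strictly positive on `[0,∞)` for every
`α > 0`. -/
theorem psi_pos (μ : Measure ℝ) [IsProbabilityMeasure μ] (hμ0 : μ (Iic 0) = 0)
    (h : ℝ → ℝ) (hmeas : Measurable h)
    (hcont : ContinuousOn h (Ici 0)) (hpos : ∀ z ≥ (0:ℝ), 0 < h z) :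
    (∀ n : ℕ, ∀ x : ℝ, 0 < x → 0 < ((Psi μ)^[n] h) x) ∧
      ∀ a : ℝ, 0 < a → ∀ u : ℝ → ℝ, Measurable u → LocBdd u →
        (∀ x ≥ (0:ℝ), u x = a * (h x + Psi μ u x)) → ∀ x ≥ (0:ℝ), 0 < u x := by
  set h₀ : ℝ → ℝ := (Ici (0:ℝ)).indicator h with hh₀
  have hEqh : EqOn h₀ h (Ici 0) := fun z hz => indicator_of_mem hz h
  have hQh : Q h₀ := by
    refine ⟨hmeas.indicator measurableSet_Ici,
      fun z hz => indicator_of_notMem (fun hmem => absurd (mem_Ici.1 hmem) (not_le.2 hz)) h,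
      fun x => ?_⟩
    obtain ⟨C, hC⟩ := (isCompact_Icc (a := (0:ℝ)) (b := x)).exists_bound_of_continuousOn
      (hcont.mono (fun z hz => hz.1))
    refine ⟨C, fun z hz => ?_⟩
    rw [hh₀, indicator_of_mem (mem_Ici.2 hz.1)]
    have := hC z hz
    rwa [Real.norm_eq_abs] at this
  have hPh : P h₀ := by
    refine ⟨hQh, fun z => ?_, fun z hz => ?_⟩
    · rcases le_or_gt 0 z with hz | hz
      · rw [hh₀, indicator_of_mem (mem_Ici.2 hz)]
        exact (hpos z hz).le
      · rw [hQh.2.1 z hz]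
    · rw [hh₀, indicator_of_mem (mem_Ici.2 hz.le)]
      exact hpos z hz.le
  constructor
  · intro n x hx
    have hp := (hPh.iter hμ0 n).2.2 x hx
    rwa [psi_iter_congr hEqh n (mem_Ici.2 hx.le)] at hp
  · intro a ha u humeas huloc hrel x hx
    set u₀ : ℝ → ℝ := (Ici (0:ℝ)).indicator u with hu₀
    have hEqu : EqOn u₀ u (Ici 0) := fun z hz => indicator_of_mem hz u
    have hQu : Q u₀ := by
      refine ⟨humeas.indicator measurableSet_Ici,
        fun z hz => indicator_of_notMem (fun hmem => absurd (mem_Ici.1 hmem) (not_le.2 hz)) u,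
        fun x' => ?_⟩
      obtain ⟨M, hM⟩ := huloc x'
      refine ⟨M, fun z hz => ?_⟩
      rw [hu₀, indicator_of_mem (mem_Ici.2 hz.1)]
      exact hM z hz
    have hrel₀ : ∀ y ≥ (0:ℝ), u₀ y = a * (h₀ y + Psi μ u₀ y) := by
      intro y hy
      rw [hEqu (mem_Ici.2 hy), hEqh (mem_Ici.2 hy), psi_congr hEqu (mem_Ici.2 hy)]
      exact hrel y hy
    obtain ⟨M, hM0, hM⟩ := hQu.bound x
    have hbound : ∀ n : ℕ, |((Psi μ)^[n] u₀) x| ≤ M * (2*x)^n / n.factorial :=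
      fun n => iter_bound hQu hx hM0 hM n x (mem_Icc.2 ⟨hx, le_rfl⟩)
    have key2 : ∀ n : ℕ, a * h x - M * (2*a*x)^(n+1) / (n+1).factorial ≤ u₀ x := by
      intro n
      have heq := series hμ0 hQh hQu hrel₀ (n+1) x hx
      -- the sum dominates its first term
      have hsum : a * h x ≤ ∑ k ∈ Finset.range (n+1), a^(k+1) * ((Psi μ)^[k] h₀) x := by
        have h0mem : (0:ℕ) ∈ Finset.range (n+1) := Finset.mem_range.2 (Nat.succ_pos n)
        have hterm : ∀ k ∈ Finset.range (n+1), 0 ≤ a^(k+1) * ((Psi μ)^[k] h₀) x :=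
          fun k _ => mul_nonneg (pow_nonneg ha.le _) ((hPh.iter hμ0 k).2.1 x)
        have := Finset.single_le_sum hterm h0mem
        calc a * h x = a^(0+1) * ((Psi μ)^[0] h₀) x := by
              simp [hEqh (mem_Ici.2 hx)]
          _ ≤ _ := this
      -- the remainder is small
      have hrem : -(M * (2*a*x)^(n+1) / (n+1).factorial)
          ≤ a^(n+1) * ((Psi μ)^[n+1] u₀) x := by
        have h5 : |a^(n+1) * ((Psi μ)^[n+1] u₀) x|
            ≤ a^(n+1) * (M * (2*x)^(n+1) / (n+1).factorial) := by
          rw [abs_mul, abs_of_pos (pow_pos ha (n+1))]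
          exact mul_le_mul_of_nonneg_left (hbound (n+1)) (pow_pos ha (n+1)).le
        have h6 : a^(n+1) * (M * (2*x)^(n+1) / (n+1).factorial)
            = M * (2*a*x)^(n+1) / (n+1).factorial := by
          rw [mul_pow, mul_pow, mul_pow]
          ring
        rw [h6] at h5
        linarith [neg_abs_le (a^(n+1) * ((Psi μ)^[n+1] u₀) x), h5]
      linarith [heq, hsum, hrem]
    have hlim : Tendsto (fun n : ℕ => a * h x - M * (2*a*x)^(n+1) / (n+1).factorial)
        atTop (nhds (a * h x)) := by
      have h7 : Tendsto (fun n : ℕ => (2*a*x)^n / (n.factorial : ℝ)) atTop (nhds 0) :=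
        FloorSemiring.tendsto_pow_div_factorial_atTop (2*a*x)
      have h8 : Tendsto (fun n : ℕ => M * ((2*a*x)^(n+1) / ((n+1).factorial : ℝ)))
          atTop (nhds (M * 0)) := ((h7.comp (tendsto_add_atTop_nat 1)).const_mul M)
      rw [mul_zero] at h8
      have h9 : Tendsto (fun n : ℕ => a * h x - M * ((2*a*x)^(n+1) / ((n+1).factorial : ℝ)))
          atTop (nhds (a * h x - 0)) := (tendsto_const_nhds).sub h8
      rw [sub_zero] at h9
      convert h9 using 2 with n
      ring
    have hfin : a * h x ≤ u₀ x := le_of_tendsto hlim (Eventually.of_forall key2)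
    have : 0 < a * h x := mul_pos ha (hpos x hx)
    have hux : u₀ x = u x := hEqu (mem_Ici.2 hx)
    linarith [hfin, hux.symm.le]
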